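/- Let F : ℝ^d → ℝ be C¹, let ε > 0, x ∈ ℝ^d and R > 0, and suppose the drift is small on the ball B(x, R) in the sense that 2R·sup_{B(x,R)} |∇F| ≤ d·ε. Let w be C² in B(x, R), continuous on the closed ball, and satisfy −ε·Δw + ⟨∇F, ∇w⟩ = 1 in B(x, R) with w = 0 on ∂B(x, R). Then for every y ∈ B(x, R): (R² − |y − x|²)/(3dε) ≤ w(y) ≤ (R² − |y − x|²)/(dε). -/

import Mathlib

open Metric Set

/-- The Euclidean Laplacian of `u` at `x`. -/
noncomputable def laplacian {d : ℕ} (u : EuclideanSpace ℝ (Fin d) → ℝ)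
    (x : EuclideanSpace ℝ (Fin d)) : ℝ :=
  ∑ i : Fin d, iteratedFDeriv ℝ 2 u x ![EuclideanSpace.single i 1, EuclideanSpace.single i 1]

/-- The operator `L_ε u = -ε Δu + ⟨∇F, ∇u⟩`. -/
noncomputable def Lop {d : ℕ} (ε : ℝ) (F u : EuclideanSpace ℝ (Fin d) → ℝ)
    (x : EuclideanSpace ℝ (Fin d)) : ℝ :=
  -ε * laplacian u x + inner ℝ (gradient F x) (gradient u x)

section Aux

open InnerProductSpace Filter

variable {d : ℕ}
local notation "E" => EuclideanSpace ℝ (Fin d)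

lemma psi_hasFDerivAt (x : E) (a b : ℝ) (y : E) :
    HasFDerivAt (fun y : E => b - a * ‖y - x‖ ^ 2)
      ((-(2 * a)) • (innerSL ℝ (y - x))) y := by
  have h1 : HasFDerivAt (fun y : E => ‖y - x‖ ^ 2) (2 • (innerSL ℝ (y - x))) y := by
    simpa using ((hasFDerivAt_id y).sub_const x).norm_sq
  have h2 := (h1.const_mul a).const_sub b
  refine h2.congr_fderiv ?_
  ext h
  simp
  ring

lemma psi_hasGradientAt (x : E) (a b : ℝ) (y : E) :
    HasGradientAt (fun y : E => b - a * ‖y - x‖ ^ 2) ((-(2 * a)) • (y - x)) y := by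
  rw [hasGradientAt_iff_hasFDerivAt]
  refine (psi_hasFDerivAt x a b y).congr_fderiv ?_
  ext h
  simp [toDual_apply_apply, real_inner_smul_left]

lemma psi_contDiff (x : E) (a b : ℝ) :
    ContDiff ℝ 2 (fun y : E => b - a * ‖y - x‖ ^ 2) :=
  contDiff_const.sub (contDiff_const.mul ((contDiff_id.sub contDiff_const).norm_sq ℝ))

lemma fderiv_fderiv_apply {f : E → ℝ} {z : E} (hf : DifferentiableAt ℝ (fderiv ℝ f) z)
    (e₁ e₂ : E) :
    fderiv ℝ (fun y => fderiv ℝ f y e₂) z e₁ = fderiv ℝ (fderiv ℝ f) z e₁ e₂ := by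
  rw [fderiv_clm_apply hf (differentiableAt_const e₂)]
  simp

lemma psi_fderiv_fderiv (x : E) (a b : ℝ) (z e₁ e₂ : E) :
    fderiv ℝ (fderiv ℝ (fun y : E => b - a * ‖y - x‖ ^ 2)) z e₁ e₂
      = -(2 * a) * inner ℝ e₁ e₂ := by
  have hψ := psi_contDiff x a b
  have hdf : DifferentiableAt ℝ (fderiv ℝ (fun y : E => b - a * ‖y - x‖ ^ 2)) z :=
    ((hψ.fderiv_right (m := 1) (le_refl _)).differentiable one_ne_zero) z
  rw [← fderiv_fderiv_apply hdf]
  have heq : (fun y => fderiv ℝ (fun y : E => b - a * ‖y - x‖ ^ 2) y e₂)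
      = fun y : E => -(2 * a) * inner ℝ e₂ (y - x) := by
    funext y
    rw [(psi_hasFDerivAt x a b y).fderiv]
    simp [real_inner_comm]
    left
    rw [inner_sub_right, real_inner_comm x e₂]
  rw [heq]
  have h3 : HasFDerivAt (fun y : E => (inner ℝ e₂ (y - x) : ℝ)) (innerSL ℝ e₂) z := by
    have := ((innerSL ℝ e₂).hasFDerivAt (x := z - x)).comp z ((hasFDerivAt_id z).sub_const x)
    exact this
  rw [(h3.const_mul (-(2 * a))).fderiv]
  simp [real_inner_comm]

lemma psi_laplacian (x : E) (a b : ℝ) (z : E) :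
    laplacian (fun y : E => b - a * ‖y - x‖ ^ 2) z = -(2 * a) * d := by
  unfold laplacian
  have : ∀ i : Fin d, iteratedFDeriv ℝ 2 (fun y : E => b - a * ‖y - x‖ ^ 2) z
      ![EuclideanSpace.single i 1, EuclideanSpace.single i 1] = -(2 * a) := by
    intro i
    rw [iteratedFDeriv_two_apply]
    simp only [Matrix.cons_val_zero, Matrix.cons_val_one, Matrix.head_cons]
    rw [psi_fderiv_fderiv]
    simp [EuclideanSpace.inner_single_left, EuclideanSpace.single_apply]
  rw [Finset.sum_congr rfl (fun i _ => this i)]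
  simp [mul_comm]

lemma secondDeriv_nonpos {g : E → ℝ} {z : E}
    (hg : ContDiffAt ℝ 2 g z) (hmax : IsLocalMax g z) (e : E) :
    fderiv ℝ (fderiv ℝ g) z e e ≤ 0 := by
  by_contra hc
  push_neg at hc
  -- the function ψ t = (fderiv g (z + t • e)) e has derivative c > 0 at 0 and ψ 0 = 0
  set ψ : ℝ → ℝ := fun t => fderiv ℝ g (z + t • e) e with hψdef
  have hline : ∀ t : ℝ, HasDerivAt (fun t : ℝ => z + t • e) e t := by
    intro t
    simpa using ((hasDerivAt_id t).smul_const e).const_add z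
  have hgd : DifferentiableAt ℝ (fderiv ℝ g) z :=
    (hg.fderiv_right (m := 1) (le_refl _)).differentiableAt one_ne_zero
  have hψ' : HasDerivAt ψ (fderiv ℝ (fderiv ℝ g) z e e) 0 := by
    have h1 : HasDerivAt (fun t : ℝ => fderiv ℝ g (z + t • e)) (fderiv ℝ (fderiv ℝ g) z e) 0 := by
      have h3 : HasFDerivAt (fderiv ℝ g) (fderiv ℝ (fderiv ℝ g) z) (z + (0:ℝ) • e) := by
        simpa using hgd.hasFDerivAt
      exact h3.comp_hasDerivAt 0 (hline 0)
    simpa using h1.clm_apply (hasDerivAt_const 0 e)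
  have hψ0 : ψ 0 = 0 := by
    simp [hψdef, hmax.fderiv_eq_zero]
  -- ψ t > 0 for small positive t
  have hslope : Tendsto (slope ψ 0) (nhdsWithin 0 {(0:ℝ)}ᶜ) (nhds (fderiv ℝ (fderiv ℝ g) z e e)) :=
    hasDerivAt_iff_tendsto_slope.mp hψ'
  have hpos : ∀ᶠ t in nhdsWithin 0 {(0:ℝ)}ᶜ, 0 < slope ψ 0 t :=
    hslope.eventually (eventually_gt_nhds hc)
  -- g is C¹ on a ball around z
  obtain ⟨u, hu, hgu⟩ := hg.contDiffOn (m := 1) (by norm_num) (by simp)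
  obtain ⟨r, hr, hru⟩ := Metric.mem_nhds_iff.mp hu
  have hder : ∀ y ∈ ball z r, HasFDerivAt g (fderiv ℝ g y) y := by
    intro y hy
    have : ContDiffAt ℝ 1 g y :=
      (hgu.mono hru).contDiffAt (isOpen_ball.mem_nhds hy)
    exact (this.differentiableAt one_ne_zero).hasFDerivAt
  -- h t = g (z + t • e) has derivative ψ t for small t
  have hht : ∀ t : ℝ, z + t • e ∈ ball z r →
      HasDerivAt (fun t : ℝ => g (z + t • e)) (ψ t) t := by
    intro t ht
    exact (hder _ ht).comp_hasDerivAt t (hline t)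
  -- the line stays in the ball for small t
  have hmem : ∀ᶠ t in nhds (0:ℝ), z + t • e ∈ ball z r := by
    have hcont : Tendsto (fun t : ℝ => z + t • e) (nhds 0) (nhds z) := by
      have := (hline 0).continuousAt
      simpa using this.tendsto
    have hz : z ∈ ball z r := mem_ball_self hr
    exact hcont.eventually (isOpen_ball.eventually_mem hz)
  -- local max along the line
  have hmax' : ∀ᶠ t in nhds (0:ℝ), g (z + t • e) ≤ g z := by
    have hcont : Tendsto (fun t : ℝ => z + t • e) (nhds 0) (nhds z) := by
      have := (hline 0).continuousAt
      simpa using this.tendsto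
    exact hcont.eventually hmax
  -- choose t0 > 0 with all properties on (0, t0]
  have hall : ∀ᶠ t in nhds (0:ℝ), (t ≠ 0 → 0 < slope ψ 0 t) ∧
      (z + t • e ∈ ball z r ∧ g (z + t • e) ≤ g z) :=
    (eventually_nhdsWithin_iff.mp hpos).mono (fun t h ht => h ht) |>.and
      (hmem.and hmax')
  obtain ⟨δ, hδ, hball⟩ := Metric.eventually_nhds_iff.mp hall
  set t0 : ℝ := δ / 2 with ht0def
  have ht0 : 0 < t0 := by positivity
  have hkey : ∀ t ∈ Icc (0:ℝ) t0, (t ≠ 0 → 0 < slope ψ 0 t) ∧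
      (z + t • e ∈ ball z r ∧ g (z + t • e) ≤ g z) := by
    intro t ht
    apply hball
    rw [Real.dist_eq]
    rw [mem_Icc] at ht
    rw [abs_sub_lt_iff]
    constructor <;> nlinarith [ht.1, ht.2]
  have hderiv : ∀ t ∈ Icc (0:ℝ) t0, HasDerivAt (fun t : ℝ => g (z + t • e)) (ψ t) t :=
    fun t ht => hht t (hkey t ht).2.1
  have hcontI : ContinuousOn (fun t : ℝ => g (z + t • e)) (Icc (0:ℝ) t0) :=
    fun t ht => ((hderiv t ht).continuousAt).continuousWithinAt
  obtain ⟨ξ, hξ, hslopeξ⟩ := exists_hasDerivAt_eq_slope (fun t : ℝ => g (z + t • e)) ψ ht0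
    hcontI (fun ξ hξ => hderiv ξ ⟨le_of_lt hξ.1, le_of_lt hξ.2⟩)
  -- ψ ξ > 0 but the slope is ≤ 0
  have hξpos : 0 < ψ ξ := by
    have h1 := (hkey ξ ⟨le_of_lt hξ.1, le_of_lt hξ.2⟩).1 (ne_of_gt hξ.1)
    rw [slope_def_field] at h1
    have h2 : 0 < ψ ξ / ξ := by simpa [hψ0] using h1
    have h3 := mul_pos h2 hξ.1
    rwa [div_mul_cancel₀ _ (ne_of_gt hξ.1)] at h3
  have hle : g (z + t0 • e) - g (z + (0:ℝ) • e) ≤ 0 := by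
    have h1 := (hkey t0 ⟨le_of_lt ht0, le_refl _⟩).2.2
    simp only [zero_smul, add_zero]
    linarith
  rw [hslopeξ] at hξpos
  have : (0:ℝ) < 0 := by
    calc (0:ℝ) < (g (z + t0 • e) - g (z + (0:ℝ) • e)) / (t0 - 0) := hξpos
    _ ≤ 0 := div_nonpos_of_nonpos_of_nonneg (by simpa using hle) (by linarith)
  exact lt_irrefl 0 this

-- gradient is zero at a local max
lemma gradient_eq_zero_of_isLocalMax {g : E → ℝ} {z : E} (hmax : IsLocalMax g z) :
    gradient g z = 0 := by
  unfold gradient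
  rw [hmax.fderiv_eq_zero]
  simp

-- laplacian in terms of second fderiv, for C² functions at a point
lemma laplacian_eq {g : E → ℝ} {z : E} :
    laplacian g z = ∑ i : Fin d,
      fderiv ℝ (fderiv ℝ g) z (EuclideanSpace.single i 1) (EuclideanSpace.single i 1) := by
  unfold laplacian
  refine Finset.sum_congr rfl fun i _ => ?_
  rw [iteratedFDeriv_two_apply]
  simp

-- maximum principle
lemma max_principle {F : E → ℝ} {ε R : ℝ} (hε : 0 < ε) (x : E) (hR : 0 < R)
    {φ : E → ℝ} (hφ2 : ContDiffOn ℝ 2 φ (ball x R))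
    (hφc : ContinuousOn φ (closedBall x R))
    (hb : ∀ y ∈ sphere x R, φ y = 0)
    (hL : ∀ y ∈ ball x R, Lop ε F φ y < 0) :
    ∀ y ∈ closedBall x R, φ y ≤ 0 := by
  obtain ⟨z, hzmem, hzmax⟩ := (isCompact_closedBall x R).exists_isMaxOn
    (Metric.nonempty_closedBall.mpr hR.le) hφc
  intro y hy
  have hyz : φ y ≤ φ z := hzmax hy
  by_contra hcon
  push_neg at hcon
  have hφz : 0 < φ z := lt_of_lt_of_le hcon hyz
  have hzball : z ∈ ball x R := by
    rcases lt_or_eq_of_le (mem_closedBall.mp hzmem) with h | h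
    · exact mem_ball.mpr h
    · exact absurd (hb z (mem_sphere.mpr h)) (by linarith)
  have hlocal : IsLocalMax φ z := by
    apply hzmax.isLocalMax
    exact mem_of_superset (isOpen_ball.mem_nhds hzball) ball_subset_closedBall
  have hc2 : ContDiffAt ℝ 2 φ z := hφ2.contDiffAt (isOpen_ball.mem_nhds hzball)
  have hlap : laplacian φ z ≤ 0 := by
    rw [laplacian_eq]
    exact Finset.sum_nonpos fun i _ => secondDeriv_nonpos hc2 hlocal _
  have hLz := hL z hzball
  rw [Lop, gradient_eq_zero_of_isLocalMax hlocal] at hLz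
  simp only [inner_zero_right, add_zero] at hLz
  nlinarith

lemma laplacian_sub {w ψ : E → ℝ} {z : E} (hw : ContDiffAt ℝ 2 w z) (hψ : ContDiffAt ℝ 2 ψ z) :
    laplacian (fun y => w y - ψ y) z = laplacian w z - laplacian ψ z := by
  have hdw : DifferentiableAt ℝ (fderiv ℝ w) z :=
    (hw.fderiv_right (m := 1) (le_refl _)).differentiableAt one_ne_zero
  have hdψ : DifferentiableAt ℝ (fderiv ℝ ψ) z :=
    (hψ.fderiv_right (m := 1) (le_refl _)).differentiableAt one_ne_zero
  have hev : fderiv ℝ (fun y => w y - ψ y) =ᶠ[nhds z]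
      fun y => fderiv ℝ w y - fderiv ℝ ψ y := by
    filter_upwards [hw.eventually (by simp), hψ.eventually (by simp)] with y hy1 hy2
    exact fderiv_fun_sub (hy1.differentiableAt two_ne_zero) (hy2.differentiableAt two_ne_zero)
  have hkey : fderiv ℝ (fderiv ℝ (fun y => w y - ψ y)) z
      = fderiv ℝ (fderiv ℝ w) z - fderiv ℝ (fderiv ℝ ψ) z := by
    rw [hev.fderiv_eq, fderiv_fun_sub hdw hdψ]
  rw [laplacian_eq, laplacian_eq, laplacian_eq, ← Finset.sum_sub_distrib]
  refine Finset.sum_congr rfl fun i _ => ?_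
  rw [hkey]
  simp

lemma gradient_sub' {w ψ : E → ℝ} {z : E} (hw : DifferentiableAt ℝ w z)
    (hψ : DifferentiableAt ℝ ψ z) :
    gradient (fun y => w y - ψ y) z = gradient w z - gradient ψ z := by
  unfold gradient
  rw [fderiv_fun_sub hw hψ, map_sub]

lemma Lop_sub {Fc w ψ : E → ℝ} {ε : ℝ} {z : E} (hw : ContDiffAt ℝ 2 w z)
    (hψ : ContDiffAt ℝ 2 ψ z) :
    Lop ε Fc (fun y => w y - ψ y) z = Lop ε Fc w z - Lop ε Fc ψ z := by
  unfold Lop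
  rw [laplacian_sub hw hψ,
    gradient_sub' (hw.differentiableAt two_ne_zero) (hψ.differentiableAt two_ne_zero),
    inner_sub_right]
  ring


lemma Lop_psi {Fc : E → ℝ} {ε : ℝ} (x : E) (a b : ℝ) (z : E) :
    Lop ε Fc (fun y : E => b - a * ‖y - x‖ ^ 2) z
      = 2 * a * ε * d + (-(2 * a)) * inner ℝ (gradient Fc z) (z - x) := by
  unfold Lop
  rw [psi_laplacian, (psi_hasGradientAt x a b z).gradient, real_inner_smul_right]
  ring

end Aux

/-- two-sided bound on the solution of `L_ε w = 1` with zero boundary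
values on a small ball (bounds (2.20)–(2.21) from the proof of Lemma 2.3). -/
theorem stmt_5 {d : ℕ} (F : EuclideanSpace ℝ (Fin d) → ℝ) (hF : ContDiff ℝ 1 F)
    (ε : ℝ) (hε : 0 < ε) (x : EuclideanSpace ℝ (Fin d)) (R : ℝ) (hR : 0 < R)
    (hdrift : 2 * R * sSup ((fun y => ‖gradient F y‖) '' Metric.ball x R) ≤ d * ε)
    (w : EuclideanSpace ℝ (Fin d) → ℝ)
    (hw2 : ContDiffOn ℝ 2 w (Metric.ball x R))
    (hwc : ContinuousOn w (Metric.closedBall x R))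
    (hweq : ∀ y ∈ Metric.ball x R, Lop ε F w y = 1)
    (hwbd : ∀ y ∈ Metric.sphere x R, w y = 0) :
    ∀ y ∈ Metric.ball x R,
      (R ^ 2 - ‖y - x‖ ^ 2) / (3 * d * ε) ≤ w y ∧
        w y ≤ (R ^ 2 - ‖y - x‖ ^ 2) / (d * ε) := by
  intro y hy
  rcases Nat.eq_zero_or_pos d with hd0 | hdpos
  · exfalso
    subst hd0
    have h1 := hweq x (mem_ball_self hR)
    simp [Lop, laplacian, PiLp.inner_apply] at h1
    rw [Subsingleton.elim (gradient F x) 0] at h1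
    simp at h1
  have hD : (0:ℝ) < d := by exact_mod_cast hdpos
  have hdε : (0:ℝ) < (d:ℝ) * ε := by positivity
  set M := sSup ((fun y => ‖gradient F y‖) '' Metric.ball x R) with hMdef
  have hgc : Continuous fun y : EuclideanSpace ℝ (Fin d) => ‖gradient F y‖ := by
    have h2 : Continuous fun y : EuclideanSpace ℝ (Fin d) => gradient F y := by
      unfold gradient
      exact (LinearIsometryEquiv.continuous _).comp (hF.continuous_fderiv one_ne_zero)
    exact h2.norm
  have hbdd : BddAbove ((fun y => ‖gradient F y‖) '' Metric.ball x R) :=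
    BddAbove.mono (Set.image_mono ball_subset_closedBall)
      ((isCompact_closedBall x R).image hgc).bddAbove
  have hM : ∀ z ∈ Metric.ball x R, ‖gradient F z‖ ≤ M := fun z hz => le_csSup hbdd ⟨z, hz, rfl⟩
  have hM0 : 0 ≤ M := le_trans (norm_nonneg _) (hM x (mem_ball_self hR))
  have hinner : ∀ z ∈ Metric.ball x R, |(inner ℝ (gradient F z) (z - x) : ℝ)| ≤ M * R := by
    intro z hz
    calc |(inner ℝ (gradient F z) (z - x) : ℝ)| ≤ ‖gradient F z‖ * ‖z - x‖ :=
          abs_real_inner_le_norm _ _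
    _ ≤ M * R := by
        have h1 : ‖z - x‖ ≤ R := by rw [← dist_eq_norm]; exact (mem_ball.mp hz).le
        exact mul_le_mul (hM z hz) h1 (norm_nonneg _) hM0
  have hLpsi : ∀ a : ℝ, 0 ≤ a → ∀ z ∈ Metric.ball x R,
      a * ((d:ℝ)*ε) ≤ Lop ε F (fun y => a*R^2 - a*‖y - x‖^2) z ∧
      Lop ε F (fun y => a*R^2 - a*‖y - x‖^2) z ≤ 3 * a * ((d:ℝ)*ε) := by
    intro a ha z hz
    have hLp := Lop_psi (Fc := F) (ε := ε) x a (a*R^2) z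
    simp only [pow_two] at hLp ⊢
    rw [hLp]
    have h2 := hinner z hz
    have h4 := abs_le.mp h2
    have h3 : 2 * (a * (M * R)) ≤ a * ((d:ℝ) * ε) := by nlinarith [hdrift]
    constructor <;> nlinarith
  have upper : ∀ δ : ℝ, 0 < δ → w y ≤ ((1+δ)/((d:ℝ)*ε)) * (R^2 - ‖y - x‖^2) := by
    intro δ hδ
    set a : ℝ := (1+δ)/((d:ℝ)*ε) with hadef
    have ha : 0 < a := by positivity
    have hψcd := psi_contDiff x a (a*R^2)
    have key := max_principle (F := F) hε x hR
      (φ := fun y => w y - (a*R^2 - a*‖y - x‖^2))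
      (hw2.sub hψcd.contDiffOn)
      (hwc.sub hψcd.continuous.continuousOn)
      (fun z hz => by
        have hn : ‖z - x‖ = R := by rw [← dist_eq_norm]; exact mem_sphere.mp hz
        show w z - (a*R^2 - a*‖z - x‖^2) = 0
        rw [hwbd z hz, hn]; ring)
      (fun z hz => by
        have hccc : ContDiffAt ℝ 2 w z := hw2.contDiffAt (isOpen_ball.mem_nhds hz)
        rw [Lop_sub hccc hψcd.contDiffAt, hweq z hz]
        have h5 := (hLpsi a ha.le z hz).1
        have haa : a * ((d:ℝ)*ε) = 1 + δ := by rw [hadef]; field_simp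
        linarith)
    have h6 : w y - (a*R^2 - a*‖y - x‖^2) ≤ 0 := key y (ball_subset_closedBall hy)
    have h7 : a*R^2 - a*‖y - x‖^2 = a * (R^2 - ‖y - x‖^2) := by ring
    linarith
  have lower : ∀ δ : ℝ, 0 < δ → δ ≤ 1/2 →
      ((1-δ)/(3*((d:ℝ)*ε))) * (R^2 - ‖y - x‖^2) ≤ w y := by
    intro δ hδ hδ1
    set a : ℝ := (1-δ)/(3*((d:ℝ)*ε)) with hadef
    have ha : 0 ≤ a := by
      apply div_nonneg
      · linarith
      · positivity
    have hψcd := psi_contDiff x a (a*R^2)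
    have key := max_principle (F := F) hε x hR
      (φ := fun y => (a*R^2 - a*‖y - x‖^2) - w y)
      (hψcd.contDiffOn.sub hw2)
      (hψcd.continuous.continuousOn.sub hwc)
      (fun z hz => by
        have hn : ‖z - x‖ = R := by rw [← dist_eq_norm]; exact mem_sphere.mp hz
        show (a*R^2 - a*‖z - x‖^2) - w z = 0
        rw [hwbd z hz, hn]; ring)
      (fun z hz => by
        have hccc : ContDiffAt ℝ 2 w z := hw2.contDiffAt (isOpen_ball.mem_nhds hz)
        rw [Lop_sub hψcd.contDiffAt hccc, hweq z hz]
        have h5 := (hLpsi a ha z hz).2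
        have haa : 3 * a * ((d:ℝ)*ε) = 1 - δ := by rw [hadef]; field_simp
        linarith)
    have h5 : (a*R^2 - a*‖y - x‖^2) - w y ≤ 0 := key y (ball_subset_closedBall hy)
    have h7 : a * (R^2 - ‖y - x‖^2) = a*R^2 - a*‖y - x‖^2 := by ring
    linarith
  have hQ : 0 < R^2 - ‖y - x‖^2 := by
    have h1 : ‖y - x‖ < R := by rw [← dist_eq_norm]; exact mem_ball.mp hy
    nlinarith [norm_nonneg (y - x)]
  constructor
  · set V : ℝ := (R^2 - ‖y - x‖^2)/(3*((d:ℝ)*ε)) with hVdef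
    have hV : 0 < V := by positivity
    have hgoal : (R^2 - ‖y - x‖^2)/(3 * (d:ℝ) * ε) = V := by rw [hVdef]; ring_nf
    rw [hgoal]
    refine le_of_forall_pos_le_add fun η hη => ?_
    set δ : ℝ := min (1/2) (η/V) with hδdef
    have hδpos : 0 < δ := lt_min (by norm_num) (by positivity)
    have h6 := lower δ hδpos (min_le_left _ _)
    have h7 : (1-δ)/(3*((d:ℝ)*ε)) * (R^2 - ‖y - x‖^2) = V - δ*V := by
      rw [hVdef]; field_simp
    have h8 : δ ≤ η/V := min_le_right _ _
    have h9 : δ * V ≤ η := by rw [le_div_iff₀ hV] at h8; exact h8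
    linarith
  · set V : ℝ := (R^2 - ‖y - x‖^2)/((d:ℝ)*ε) with hVdef
    have hV : 0 < V := by positivity
    refine le_of_forall_pos_le_add fun η hη => ?_
    have h6 := upper (η/V) (by positivity)
    have h7 : ((1+η/V)/((d:ℝ)*ε)) * (R^2 - ‖y - x‖^2) = V + η := by
      rw [hVdef]; field_simp
    linarith
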